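/- Let A be an n×n real symmetric matrix with nonnegative entries and zero diagonal (the adjacency matrix of a simple undirected graph), let β, δ : {1,…,n} → ℝ with β_i > 0 and δ_i ≥ 0 for all i, and let ε > 0. Suppose the matrix (D − εI)B⁻¹ − A is positive semidefinite, where B = diag(β_1,…,β_n) and D = diag(δ_1,…,δ_n). Let p : ℝ → ℝⁿ be a differentiable function satisfying, for all t ≥ 0 and all i, dp_i/dt = (1 − p_i(t)) β_i ∑_{j=1}^n a_{ij} p_j(t) − δ_i p_i(t), and suppose p_i(t) ∈ [0,1] for all i and all t ≥ 0. Then there exists α > 0 such that ‖p(t)‖ ≤ α ‖p(0)‖ e^{−εt} for all t ≥ 0, where ‖·‖ is the Euclidean norm. -/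

import Mathlib

/-- **Exponential stability of the heterogeneous N-intertwined SIS model.**
If `A` is the adjacency matrix of a simple undirected graph (symmetric, nonnegative,
zero diagonal), the infection rates `β i` are positive, the curing rates `δ i` are
nonnegative, `ε > 0`, and the matrix `(D - εI)B⁻¹ - A` is positive semidefinite
(equivalently `λ₁(BA - D) ≤ -ε`), then any solution `p` of the SIS dynamics with
values in `[0,1]ⁿ` converges to zero exponentially fast with rate `ε`. -/
theorem sis_heterogeneous_exponential_stability
    {n : ℕ} (A : Matrix (Fin n) (Fin n) ℝ)
    (hA : A.IsSymm) (hAnonneg : ∀ i j, 0 ≤ A i j) (hAdiag : ∀ i, A i i = 0)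
    (β δ : Fin n → ℝ) (hβ : ∀ i, 0 < β i) (hδ : ∀ i, 0 ≤ δ i)
    (ε : ℝ) (hε : 0 < ε)
    (hPSD : (Matrix.diagonal (fun i => (δ i - ε) / β i) - A).PosSemidef)
    (p : ℝ → EuclideanSpace ℝ (Fin n))
    (hode : ∀ t ≥ (0 : ℝ), ∀ i, HasDerivAt (fun s => p s i)
      ((1 - p t i) * β i * (∑ j, A i j * p t j) - δ i * p t i) t)
    (hrange : ∀ t ≥ (0 : ℝ), ∀ i, p t i ∈ Set.Icc (0 : ℝ) 1) :
    ∃ α > (0 : ℝ), ∀ t ≥ (0 : ℝ), ‖p t‖ ≤ α * ‖p 0‖ * Real.exp (-ε * t) := by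
  rcases Nat.eq_zero_or_pos n with hn | hn
  · refine ⟨1, one_pos, fun t ht => ?_⟩
    subst hn
    have h0 : p t = 0 := Subsingleton.elim _ _
    have h00 : p 0 = 0 := Subsingleton.elim _ _
    simp [h0, h00, Real.exp_nonneg]
  have hne : (Finset.univ : Finset (Fin n)).Nonempty := by
    simpa [Finset.univ_nonempty_iff] using Fin.pos_iff_nonempty.mp hn
  set m : ℝ := Finset.univ.inf' hne β with hm
  set M : ℝ := Finset.univ.sup' hne β with hM
  have hmle : ∀ i, m ≤ β i := fun i => Finset.inf'_le β (Finset.mem_univ i)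
  have hleM : ∀ i, β i ≤ M := fun i => Finset.le_sup' β (Finset.mem_univ i)
  have hm0 : 0 < m := by
    obtain ⟨j, _, hj⟩ := Finset.exists_mem_eq_inf' hne β
    rw [hm, hj]; exact hβ j
  have hM0 : 0 < M := lt_of_lt_of_le hm0 (le_trans (hmle hne.choose) (hleM hne.choose))
  -- Lyapunov function
  set V : ℝ → ℝ := fun t => ∑ i, (p t i) ^ 2 / β i with hV
  -- derivative of V
  have hVd : ∀ t ≥ (0:ℝ), HasDerivAt V
      (∑ i, (2 * p t i *
        ((1 - p t i) * β i * (∑ j, A i j * p t j) - δ i * p t i)) / β i) t := by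
    intro t ht
    refine HasDerivAt.fun_sum (fun i _ => ?_)
    have h1 := (hode t ht i).pow 2
    simpa using h1.div_const (β i)
  -- key differential inequality
  have hkey : ∀ t ≥ (0:ℝ),
      (∑ i, (2 * p t i *
        ((1 - p t i) * β i * (∑ j, A i j * p t j) - δ i * p t i)) / β i)
      ≤ -(2 * ε) * V t := by
    intro t ht
    set x : Fin n → ℝ := fun i => p t i with hxdef
    -- PSD inequality
    have h2 := hPSD.dotProduct_mulVec_nonneg x
    simp only [dotProduct, Matrix.mulVec, Matrix.sub_apply, Pi.star_apply, star_trivial,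
      Matrix.diagonal_apply, sub_mul, Finset.sum_sub_distrib, mul_sub,
      ite_mul, zero_mul, Finset.sum_ite_eq, Finset.mem_univ, if_true] at h2
    have h3 : ∀ i ∈ Finset.univ, x i * ((δ i - ε) / β i * x i)
        = (δ i - ε) / β i * x i ^ 2 := fun i _ => by ring
    rw [Finset.sum_congr rfl h3] at h2
    have hq : ∑ i, x i * ∑ j, A i j * x j ≤ ∑ i, (δ i - ε) / β i * x i ^ 2 := by
      linarith
    -- pointwise bound
    have hpt : ∀ i ∈ Finset.univ,
        (2 * x i * ((1 - x i) * β i * (∑ j, A i j * x j) - δ i * x i)) / β i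
        ≤ 2 * (x i * (∑ j, A i j * x j) - (δ i - ε) / β i * x i ^ 2)
          - 2 * ε * (x i ^ 2 / β i) := by
      intro i _
      have hbi := hβ i
      have hxi := hrange t ht i
      have hS : 0 ≤ ∑ j, A i j * x j :=
        Finset.sum_nonneg fun j _ => mul_nonneg (hAnonneg i j) (hrange t ht j).1
      have hred : (2 * x i * ((1 - x i) * β i * (∑ j, A i j * x j) - δ i * x i)) / β i
          = 2 * x i * (1 - x i) * (∑ j, A i j * x j) - 2 * δ i * x i ^ 2 / β i := by
        field_simp
      have hrhs : 2 * (x i * (∑ j, A i j * x j) - (δ i - ε) / β i * x i ^ 2)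
          - 2 * ε * (x i ^ 2 / β i)
          = 2 * x i * (∑ j, A i j * x j) - 2 * δ i * x i ^ 2 / β i := by
        field_simp
        ring
      rw [hred, hrhs]
      have : 2 * x i * (1 - x i) * (∑ j, A i j * x j)
          ≤ 2 * x i * (∑ j, A i j * x j) := by
        nlinarith [hxi.1, hxi.2, hS]
      linarith
    calc ∑ i, (2 * x i * ((1 - x i) * β i * (∑ j, A i j * x j) - δ i * x i)) / β i
        ≤ ∑ i, (2 * (x i * (∑ j, A i j * x j) - (δ i - ε) / β i * x i ^ 2)
            - 2 * ε * (x i ^ 2 / β i)) := Finset.sum_le_sum hpt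
      _ = 2 * ((∑ i, x i * ∑ j, A i j * x j) - ∑ i, (δ i - ε) / β i * x i ^ 2)
            - 2 * ε * ∑ i, x i ^ 2 / β i := by
          simp only [Finset.sum_sub_distrib, ← Finset.mul_sum]
      _ ≤ -(2 * ε) * V t := by
          have : (∑ i, x i * ∑ j, A i j * x j) - ∑ i, (δ i - ε) / β i * x i ^ 2 ≤ 0 := by
            linarith
          have hVt : V t = ∑ i, x i ^ 2 / β i := rfl
          rw [hVt]; linarith
  -- g is antitone
  set g : ℝ → ℝ := fun t => V t * Real.exp (2 * ε * t) with hg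
  have hgd : ∀ t ≥ (0:ℝ), HasDerivAt g
      ((∑ i, (2 * p t i *
        ((1 - p t i) * β i * (∑ j, A i j * p t j) - δ i * p t i)) / β i)
        * Real.exp (2 * ε * t) + V t * (Real.exp (2 * ε * t) * (2 * ε))) t := by
    intro t ht
    have he : HasDerivAt (fun s : ℝ => Real.exp (2 * ε * s))
        (Real.exp (2 * ε * t) * (2 * ε)) t := by
      simpa using (((hasDerivAt_id t).const_mul (2 * ε)).exp)
    exact (hVd t ht).mul he
  have hanti : AntitoneOn g (Set.Ici 0) := by
    have hint : interior (Set.Ici (0:ℝ)) = Set.Ioi 0 := interior_Ici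
    apply antitoneOn_of_deriv_nonpos (convex_Ici 0)
    · intro t ht
      exact ((hgd t ht).continuousAt).continuousWithinAt
    · intro t ht
      rw [hint] at ht
      exact ((hgd t (le_of_lt ht)).differentiableAt).differentiableWithinAt
    · intro t ht
      rw [hint] at ht
      rw [(hgd t (le_of_lt ht)).deriv]
      have h1 := hkey t (le_of_lt ht)
      have h2 : (0:ℝ) < Real.exp (2 * ε * t) := Real.exp_pos _
      nlinarith
  -- V decay
  have hVdecay : ∀ t ≥ (0:ℝ), V t ≤ V 0 * Real.exp (-(2 * ε) * t) := by
    intro t ht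
    have h1 : g t ≤ g 0 := hanti (Set.mem_Ici.mpr le_rfl) (Set.mem_Ici.mpr ht) ht
    have h2 : g 0 = V 0 := by simp [hg]
    have h3 : (0:ℝ) < Real.exp (2 * ε * t) := Real.exp_pos _
    have h4 : V t = g t * Real.exp (-(2 * ε) * t) := by
      simp only [hg, neg_mul, Real.exp_neg]
      field_simp
    rw [h4]
    calc g t * Real.exp (-(2 * ε) * t) ≤ g 0 * Real.exp (-(2 * ε) * t) := by
          exact mul_le_mul_of_nonneg_right h1 (Real.exp_nonneg _)
      _ = V 0 * Real.exp (-(2 * ε) * t) := by rw [h2]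
  -- norm bounds
  refine ⟨Real.sqrt (M / m), Real.sqrt_pos.mpr (div_pos hM0 hm0), fun t ht => ?_⟩
  have hnormsq : ∀ s, ‖p s‖ ^ 2 = ∑ i, (p s i) ^ 2 := by
    intro s
    rw [EuclideanSpace.norm_eq]
    rw [Real.sq_sqrt (Finset.sum_nonneg fun i _ => sq_nonneg _)]
    congr 1; ext i; rw [Real.norm_eq_abs, sq_abs]
  have hub : ‖p t‖ ^ 2 ≤ M * V t := by
    rw [hnormsq]
    calc ∑ i, (p t i) ^ 2 ≤ ∑ i, M * ((p t i) ^ 2 / β i) := by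
          refine Finset.sum_le_sum fun i _ => ?_
          rw [mul_div_assoc']
          rw [le_div_iff₀ (hβ i)]
          nlinarith [sq_nonneg (p t i), hleM i, hβ i]
      _ = M * V t := by rw [← Finset.mul_sum]
  have hlb : V 0 ≤ ‖p 0‖ ^ 2 / m := by
    rw [hnormsq]
    rw [Finset.sum_div]
    refine Finset.sum_le_sum fun i _ => ?_
    exact div_le_div_of_nonneg_left (sq_nonneg _) hm0 (hmle i)
  have hfinal : ‖p t‖ ^ 2 ≤ (M / m) * ‖p 0‖ ^ 2 * Real.exp (-(2 * ε) * t) := by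
    calc ‖p t‖ ^ 2 ≤ M * V t := hub
      _ ≤ M * (V 0 * Real.exp (-(2 * ε) * t)) := by
          refine mul_le_mul_of_nonneg_left ?_ (le_of_lt hM0)
          exact hVdecay t ht
      _ ≤ M * ((‖p 0‖ ^ 2 / m) * Real.exp (-(2 * ε) * t)) := by
          refine mul_le_mul_of_nonneg_left ?_ (le_of_lt hM0)
          exact mul_le_mul_of_nonneg_right hlb (Real.exp_nonneg _)
      _ = (M / m) * ‖p 0‖ ^ 2 * Real.exp (-(2 * ε) * t) := by ring
  have hr : (Real.sqrt (M / m) * ‖p 0‖ * Real.exp (-ε * t)) ^ 2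
      = (M / m) * ‖p 0‖ ^ 2 * Real.exp (-(2 * ε) * t) := by
    rw [mul_pow, mul_pow, Real.sq_sqrt (le_of_lt (div_pos hM0 hm0))]
    rw [← Real.exp_nat_mul]
    ring_nf
  have h1 : 0 ≤ Real.sqrt (M / m) * ‖p 0‖ * Real.exp (-ε * t) :=
    mul_nonneg (mul_nonneg (Real.sqrt_nonneg _) (norm_nonneg _)) (Real.exp_nonneg _)
  nlinarith [norm_nonneg (p t), hfinal, hr]
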